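/- arXiv:1404.7612 — 2 statements merged into one kernel-verified Lean document; each statement's English description precedes it below -/
import Mathlib

section
/- Let 1<α<2, n≥3 and σ>0, and set I = ∫_0^∞ θ^{α−αn/2−1} μ_n(θ^{−α/2}) exp(−σ θ^{−α/(2−α)}) dθ (a finite quantity). Then for every t>0 and every x ∈ ℝⁿ with x≠0, ∫_0^t (t−τ)^{α−αn/2−1} μ_n((t−τ)^{−α/2}|x|) exp(−σ((t−τ)^{−α/2}|x|)^{2/(2−α)}) dτ ≤ I · |x|^{−n+2}; in particular the left-hand side is bounded by a constant multiple of |x|^{−n+2} uniformly in t. -/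
open MeasureTheory Filter Set

/-- `μ_n(z)` for `z > 0`: `1` if `n = 3`, `1 + |log z|` if `n = 4`, `z^{-n+4}` if `n ≥ 5`. -/
noncomputable def mun (n : ℕ) (z : ℝ) : ℝ :=
  if n = 3 then 1 else if n = 4 then 1 + |Real.log z| else z ^ ((4 : ℝ) - n)

/-- The profile function. -/
noncomputable def Gf (α σ : ℝ) (n : ℕ) : ℝ → ℝ := fun θ =>
  θ ^ (α - α * n / 2 - 1) * mun n (θ ^ (-α / 2)) * Real.exp (-σ * θ ^ (-(α / (2 - α))))

/-- The kernel function of one variable. -/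
noncomputable def Fk (α σ r : ℝ) (n : ℕ) : ℝ → ℝ := fun s =>
  s ^ (α - α * n / 2 - 1) * mun n (s ^ (-α / 2) * r)
    * Real.exp (-σ * (s ^ (-α / 2) * r) ^ (2 / (2 - α)))

lemma mun_nonneg (n : ℕ) {z : ℝ} (hz : 0 < z) : 0 ≤ mun n z := by
  unfold mun
  split_ifs
  · norm_num
  · have := abs_nonneg (Real.log z); linarith
  · exact Real.rpow_nonneg hz.le _

lemma Gf_nonneg (α σ : ℝ) (n : ℕ) {θ : ℝ} (hθ : 0 < θ) : 0 ≤ Gf α σ n θ := by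
  unfold Gf
  have h1 : (0:ℝ) < θ ^ (-α/2) := Real.rpow_pos_of_pos hθ _
  have h2 : 0 ≤ mun n (θ ^ (-α/2)) := mun_nonneg n h1
  positivity

lemma abs_log_le_aux {u : ℝ} (hu : 0 < u) :
    |Real.log u| ≤ 2 * (u ^ (2⁻¹ : ℝ) + u ^ (-2⁻¹ : ℝ)) := by
  have h1 : (0:ℝ) < 2⁻¹ := by norm_num
  have hA : 0 ≤ u ^ (2⁻¹:ℝ) := Real.rpow_nonneg hu.le _
  have hB : 0 ≤ u ^ (-2⁻¹:ℝ) := Real.rpow_nonneg hu.le _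
  rcases abs_cases (Real.log u) with ⟨h, _⟩ | ⟨h, _⟩
  · rw [h]
    have h2 := Real.log_le_rpow_div hu.le h1
    have h3 : u ^ (2⁻¹:ℝ) / 2⁻¹ = 2 * u ^ (2⁻¹:ℝ) := by ring
    linarith
  · rw [h]
    have h2 : Real.log u⁻¹ ≤ u⁻¹ ^ (2⁻¹:ℝ) / 2⁻¹ :=
      Real.log_le_rpow_div (by positivity) h1
    rw [Real.log_inv, Real.inv_rpow hu.le, ← Real.rpow_neg hu.le] at h2
    have h3 : u ^ (-2⁻¹:ℝ) / 2⁻¹ = 2 * u ^ (-2⁻¹:ℝ) := by ring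
    linarith

lemma Gf_integrable (α σ : ℝ) (n : ℕ) (hα₁ : 1 < α) (hα₂ : α < 2) (hn : 3 ≤ n) (hσ : 0 < σ) :
    IntegrableOn (Gf α σ n) (Ioi 0) := by
  have h2α : (0:ℝ) < 2 - α := by linarith
  have hα0 : (0:ℝ) < α := by linarith
  have hq1 : 1 ≤ α / (2 - α) := by rw [le_div_iff₀ h2α]; linarith
  rw [← integrableOn_Ioi_comp_rpow_iff' (Gf α σ n) (p := (-1:ℝ)) (by norm_num)]
  have key : ∀ x ∈ Ioi (0:ℝ), x ^ ((-1:ℝ) - 1) • Gf α σ n (x ^ (-1:ℝ))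
      = x ^ (-(α - α * n / 2 - 1) - 2) * mun n (x ^ (α/2))
        * Real.exp (-σ * x ^ (α/(2-α))) := by
    intro x hx
    have hx0 : (0:ℝ) < x := hx
    have hbase : ∀ y : ℝ, (x ^ (-1:ℝ)) ^ y = x ^ (-y) := fun y => by
      rw [← Real.rpow_mul hx0.le, neg_one_mul]
    unfold Gf
    rw [smul_eq_mul, hbase, hbase, hbase,
      show -(-α/2) = α/2 from by ring, show -(-(α/(2-α))) = α/(2-α) from by ring,
      show x ^ ((-1:ℝ)-1) * (x ^ (-(α - α*(n:ℝ)/2 - 1)) * mun n (x ^ (α/2))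
          * Real.exp (-σ * x ^ (α/(2-α))))
        = (x ^ ((-1:ℝ)-1) * x ^ (-(α - α*(n:ℝ)/2 - 1))) * mun n (x ^ (α/2))
          * Real.exp (-σ * x ^ (α/(2-α))) from by ring,
      ← Real.rpow_add hx0,
      show ((-1:ℝ)-1) + (-(α - α*(n:ℝ)/2 - 1)) = -(α - α*(n:ℝ)/2 - 1) - 2 from by ring]
  apply MeasureTheory.IntegrableOn.congr_fun _ (fun x hx => (key x hx).symm) measurableSet_Ioi
  rcases Nat.lt_or_ge n 5 with h5 | h5
  · interval_cases n
    · -- n = 3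
      refine (integrableOn_rpow_mul_exp_neg_mul_rpow (s := α/2 - 1) (p := α/(2-α))
        (by linarith) (by linarith) hσ).congr_fun (fun x hx => ?_) measurableSet_Ioi
      have hx0 : (0:ℝ) < x := hx
      simp only [mun, if_pos rfl, mul_one]
      congr 2
      push_cast; ring
    · -- n = 4
      have hint : IntegrableOn (fun x : ℝ => x ^ (α-1) * (1 + α/2 * |Real.log x|)
          * Real.exp (-σ * x ^ (α/(2-α)))) (Ioi 0) := by
        have i1 := integrableOn_rpow_mul_exp_neg_mul_rpow (s := α - 1) (p := α/(2-α))
          (by linarith) (by linarith) hσ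
        have i2 := integrableOn_rpow_mul_exp_neg_mul_rpow (s := α - 1 + 2⁻¹) (p := α/(2-α))
          (by norm_num; linarith) (by linarith) hσ
        have i3 := integrableOn_rpow_mul_exp_neg_mul_rpow (s := α - 1 - 2⁻¹) (p := α/(2-α))
          (by norm_num; linarith) (by linarith) hσ
        have hD : IntegrableOn (fun x : ℝ =>
            x^(α-1)*Real.exp (-σ*x^(α/(2-α)))
            + α * (x^(α-1+2⁻¹)*Real.exp (-σ*x^(α/(2-α))))
            + α * (x^(α-1-2⁻¹)*Real.exp (-σ*x^(α/(2-α))))) (Ioi 0) :=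
          (i1.add (i2.const_mul α)).add (i3.const_mul α)
        apply Integrable.mono' hD
        · refine (ContinuousOn.mul (ContinuousOn.mul ?_ ?_) ?_).aestronglyMeasurable
            measurableSet_Ioi
          · intro y hy
            exact (Real.continuousAt_rpow_const y _ (Or.inl (ne_of_gt hy))).continuousWithinAt
          · intro y hy
            exact (continuousAt_const.add
              (((Real.continuousAt_log (ne_of_gt hy)).abs).const_mul _)).continuousWithinAt
          · intro y hy
            exact (Real.continuous_exp.continuousAt.comp
              (((Real.continuousAt_rpow_const y _ (Or.inl (ne_of_gt hy))).const_mul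
                (-σ)))).continuousWithinAt
        · rw [ae_restrict_iff' measurableSet_Ioi]
          filter_upwards with x hx
          have hx0 : (0:ℝ) < x := hx
          have hA : 0 ≤ x ^ (α-1) := Real.rpow_nonneg hx0.le _
          have hE : 0 ≤ Real.exp (-σ * x ^ (α/(2-α))) := (Real.exp_pos _).le
          have hlog := abs_log_le_aux hx0
          have hLnn : 0 ≤ |Real.log x| := abs_nonneg _
          have e2 : x ^ (α-1+2⁻¹) = x ^ (α-1) * x ^ (2⁻¹:ℝ) := Real.rpow_add hx0 _ _
          have e3 : x ^ (α-1-2⁻¹) = x ^ (α-1) * x ^ (-2⁻¹:ℝ) := by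
            rw [← Real.rpow_add hx0]; ring_nf
          rw [Real.norm_eq_abs, abs_of_nonneg
            (by positivity : (0:ℝ) ≤ x ^ (α-1) * (1 + α/2 * |Real.log x|)
              * Real.exp (-σ * x ^ (α/(2-α)))), e2, e3]
          have hmul : α/2 * |Real.log x| ≤ α * (x ^ (2⁻¹:ℝ) + x ^ (-2⁻¹:ℝ)) := by
            have := mul_le_mul_of_nonneg_left hlog (by linarith : (0:ℝ) ≤ α/2)
            calc α/2 * |Real.log x| ≤ α/2 * (2 * (x ^ (2⁻¹:ℝ) + x ^ (-2⁻¹:ℝ))) := this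
              _ = α * (x ^ (2⁻¹:ℝ) + x ^ (-2⁻¹:ℝ)) := by ring
          have hAE : 0 ≤ x ^ (α-1) * Real.exp (-σ * x ^ (α/(2-α))) := mul_nonneg hA hE
          nlinarith [mul_le_mul_of_nonneg_right
            (mul_le_mul_of_nonneg_left hmul hA) hE]
      refine hint.congr_fun (fun x hx => ?_) measurableSet_Ioi
      have hx0 : (0:ℝ) < x := hx
      simp only [mun]
      norm_num
      rw [Real.log_rpow hx0, abs_mul, abs_of_pos (by linarith : (0:ℝ) < α/2)]
      congr 2
      push_cast; ring
  · -- n ≥ 5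
    have hn3 : n ≠ 3 := by omega
    have hn4 : n ≠ 4 := by omega
    refine (integrableOn_rpow_mul_exp_neg_mul_rpow (s := α - 1) (p := α/(2-α))
      (by linarith) (by linarith) hσ).congr_fun (fun x hx => ?_) measurableSet_Ioi
    have hx0 : (0:ℝ) < x := hx
    simp only [mun, if_neg hn3, if_neg hn4]
    rw [← Real.rpow_mul hx0.le, ← Real.rpow_add hx0]
    congr 2
    push_cast
    ring

/-- Change of variables identity. -/
lemma Fk_eq (α σ : ℝ) (n : ℕ) {r s : ℝ} (hα₁ : 1 < α) (hα₂ : α < 2)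
    (hr : 0 < r) (hs : 0 < s) :
    Fk α σ r n s = r ^ ((α - α * n / 2 - 1) * (2/α)) * Gf α σ n (s * r ^ (-(2/α))) := by
  have hα0 : (0:ℝ) < α := by linarith
  have h2α : (0:ℝ) < 2 - α := by linarith
  have hd : 0 < r ^ (-(2/α)) := Real.rpow_pos_of_pos hr _
  have hsd : 0 < s * r ^ (-(2/α)) := mul_pos hs hd
  have h2 : (s * r ^ (-(2/α))) ^ (-α/2) = s ^ (-α/2) * r := by
    rw [Real.mul_rpow hs.le hd.le, ← Real.rpow_mul hr.le,
      show -(2/α) * (-α/2) = 1 from by field_simp, Real.rpow_one]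
  have h3 : (s * r ^ (-(2/α))) ^ (-(α/(2-α))) = (s ^ (-α/2) * r) ^ (2/(2-α)) := by
    rw [← h2, ← Real.rpow_mul hsd.le]
    congr 1
    field_simp
  have h1 : (s * r ^ (-(2/α))) ^ (α - α*(n:ℝ)/2 - 1)
      = s ^ (α - α*(n:ℝ)/2 - 1) * (r ^ (-(2/α))) ^ (α - α*(n:ℝ)/2 - 1) :=
    Real.mul_rpow hs.le hd.le
  have h4 : r ^ ((α - α*(n:ℝ)/2 - 1) * (2/α)) * (r ^ (-(2/α))) ^ (α - α*(n:ℝ)/2 - 1) = 1 := by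
    rw [← Real.rpow_mul hr.le, ← Real.rpow_add hr,
      show (α - α*(n:ℝ)/2 - 1) * (2/α) + -(2/α) * (α - α*(n:ℝ)/2 - 1) = 0 from by ring,
      Real.rpow_zero]
  unfold Fk Gf
  rw [h1, h2, h3]
  generalize mun n (s ^ (-α/2) * r) = M
  generalize Real.exp (-σ * (s ^ (-α/2) * r) ^ (2/(2-α))) = E
  linear_combination (-(s ^ (α - α * (n:ℝ) / 2 - 1) * M * E)) * h4

/-- The kernel bound `|k(t,x)| ≤ I·|x|^{-n+2}` uniformly in `t`, obtained by substitution
`θ = (t-τ)|x|^{-2/α}` from the finite profile integral `I`. -/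
theorem convolution_kernel_bound
    (α σ : ℝ) (n : ℕ) (hα₁ : 1 < α) (hα₂ : α < 2) (hn : 3 ≤ n) (hσ : 0 < σ)
    (x : EuclideanSpace ℝ (Fin n)) (hx : x ≠ 0)
    (I : ℝ)
    (hI : I = ∫ θ in Ioi (0 : ℝ), θ ^ (α - α * n / 2 - 1) * mun n (θ ^ (-α / 2))
        * Real.exp (-σ * θ ^ (-(α / (2 - α))))) :
    ∀ t : ℝ, 0 < t →
      IntegrableOn
        (fun τ : ℝ => (t - τ) ^ (α - α * n / 2 - 1) * mun n ((t - τ) ^ (-α / 2) * ‖x‖)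
          * Real.exp (-σ * ((t - τ) ^ (-α / 2) * ‖x‖) ^ (2 / (2 - α)))) (Ioc 0 t) ∧
      (∫ τ in (0 : ℝ)..t,
          (t - τ) ^ (α - α * n / 2 - 1) * mun n ((t - τ) ^ (-α / 2) * ‖x‖)
            * Real.exp (-σ * ((t - τ) ^ (-α / 2) * ‖x‖) ^ (2 / (2 - α))))
        ≤ I * ‖x‖ ^ ((2 : ℝ) - n) := by
  intro t ht
  have hr : (0:ℝ) < ‖x‖ := norm_pos_iff.mpr hx
  have hα0 : (0:ℝ) < α := by linarith
  have hI' : I = ∫ θ in Ioi (0:ℝ), Gf α σ n θ := hI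
  set r := ‖x‖ with hrdef
  suffices h : IntegrableOn (fun τ => Fk α σ r n (t - τ)) (Ioc 0 t) ∧
      (∫ τ in (0:ℝ)..t, Fk α σ r n (t - τ)) ≤ I * r ^ ((2:ℝ) - n) by
    obtain ⟨h1, h2⟩ := h
    simp only [Fk] at h1 h2
    exact ⟨h1, h2⟩
  have hd : (0:ℝ) < r ^ (-(2/α)) := Real.rpow_pos_of_pos hr _
  set d := r ^ (-(2/α)) with hdd
  set K := r ^ ((α - α*(n:ℝ)/2 - 1) * (2/α)) with hKd
  have hK : 0 < K := Real.rpow_pos_of_pos hr _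
  have hGi := Gf_integrable α σ n hα₁ hα₂ hn hσ
  have htd : (0:ℝ) ≤ t * d := by positivity
  have II1 : IntervalIntegrable (Gf α σ n) volume 0 (t*d) :=
    (intervalIntegrable_iff_integrableOn_Ioc_of_le htd).mpr (hGi.mono_set Ioc_subset_Ioi_self)
  have II2 : IntervalIntegrable (fun s => Gf α σ n (s * d)) volume 0 t := by
    have h := II1.comp_mul_right (c := d)
    rwa [zero_div, mul_div_cancel_right₀ _ hd.ne'] at h
  have II3 : IntervalIntegrable (fun s => K * Gf α σ n (s * d)) volume 0 t := II2.const_mul K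
  have II4 : IntervalIntegrable (Fk α σ r n) volume 0 t := by
    rw [intervalIntegrable_iff_integrableOn_Ioc_of_le ht.le] at II3 ⊢
    exact II3.congr_fun (fun s hs => (Fk_eq α σ n hα₁ hα₂ hr hs.1).symm) measurableSet_Ioc
  have II5 : IntervalIntegrable (fun τ => Fk α σ r n (t - τ)) volume 0 t := by
    have h := II4.comp_sub_left t
    rw [sub_zero, sub_self] at h
    exact h.symm
  refine ⟨(intervalIntegrable_iff_integrableOn_Ioc_of_le ht.le).mp II5, ?_⟩
  have e1 : (∫ τ in (0:ℝ)..t, Fk α σ r n (t - τ)) = ∫ s in (0:ℝ)..t, Fk α σ r n s := by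
    rw [intervalIntegral.integral_comp_sub_left (Fk α σ r n) t, sub_zero, sub_self]
  have e2 : (∫ s in (0:ℝ)..t, Fk α σ r n s)
      = K * (d⁻¹ * ∫ θ in (0:ℝ)..(t*d), Gf α σ n θ) := by
    have eq1 : (∫ s in (0:ℝ)..t, Fk α σ r n s) = ∫ s in (0:ℝ)..t, K * Gf α σ n (s * d) := by
      rw [intervalIntegral.integral_of_le ht.le, intervalIntegral.integral_of_le ht.le]
      exact setIntegral_congr_fun measurableSet_Ioc
        (fun s hs => Fk_eq α σ n hα₁ hα₂ hr hs.1)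
    rw [eq1, intervalIntegral.integral_const_mul]
    congr 1
    rw [intervalIntegral.integral_comp_mul_right (Gf α σ n) hd.ne', zero_mul, smul_eq_mul]
  have e4 : (∫ θ in (0:ℝ)..(t*d), Gf α σ n θ) ≤ I := by
    rw [hI', intervalIntegral.integral_of_le htd]
    refine setIntegral_mono_set hGi ?_ (HasSubset.Subset.eventuallyLE Ioc_subset_Ioi_self)
    filter_upwards [ae_restrict_mem measurableSet_Ioi] with θ hθ using Gf_nonneg α σ n hθ
  have hdinv : d⁻¹ = r ^ (2/α) := by rw [hdd, Real.rpow_neg hr.le, inv_inv]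
  have hKd2 : K * d⁻¹ = r ^ ((2:ℝ) - (n:ℝ)) := by
    rw [hdinv, hKd, ← Real.rpow_add hr]
    congr 1
    field_simp
    ring
  rw [e1, e2]
  calc K * (d⁻¹ * ∫ θ in (0:ℝ)..(t*d), Gf α σ n θ) ≤ K * (d⁻¹ * I) := by
        apply mul_le_mul_of_nonneg_left _ hK.le
        exact mul_le_mul_of_nonneg_left e4 (inv_nonneg.mpr hd.le)
    _ = I * r ^ ((2:ℝ) - (n:ℝ)) := by rw [← mul_assoc, hKd2]; ring
end

section
/- Let 1<α<2, n≥3, σ>0 and fix x ∈ ℝⁿ with x≠0. Define h(s) = s^{α−αn/2−1} μ_n(s^{−α/2}|x|) exp(−σ(s^{−α/2}|x|)^{2/(2−α)}) for s>0. Then ∫_0^t h(t−τ)(1+τ)^{−1} dτ → 0 as t → ∞. -/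
open MeasureTheory Filter Set Topology

lemma pow_le_exp_aux (k : ℕ) {x : ℝ} (hx : 0 ≤ x) : x ^ k ≤ (k:ℝ)^k * Real.exp x := by
  rcases Nat.eq_zero_or_pos k with hk | hk
  · subst hk; simpa using Real.one_le_exp hx
  · have hk' : (0:ℝ) < k := by exact_mod_cast hk
    have h1 : x / k ≤ Real.exp (x / k) := by
      have := Real.add_one_le_exp (x / k); linarith
    have h2 : (x / k) ^ k ≤ Real.exp (x / k) ^ k := pow_le_pow_left₀ (by positivity) h1 k
    rw [← Real.exp_nat_mul] at h2
    have h3 : (k:ℝ) * (x / k) = x := by field_simp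
    rw [h3] at h2
    have h4 : x ^ k = (k:ℝ)^k * (x/k)^k := by rw [← mul_pow]; congr 1; field_simp
    rw [h4]
    exact mul_le_mul_of_nonneg_left h2 (by positivity)

lemma bounded_aux {a r b : ℝ} (ha : 0 < a) (hr : 0 < r) (hb : 0 < b) :
    ∃ C : ℝ, 0 ≤ C ∧ ∀ s ∈ Set.Ioc (0:ℝ) 1, s ^ (-b) * Real.exp (-(a * s ^ (-r))) ≤ C := by
  set k : ℕ := ⌈b / r⌉₊ with hk
  refine ⟨(k:ℝ)^k / a^k, by positivity, ?_⟩
  rintro s ⟨hs0, hs1⟩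
  set u : ℝ := s ^ (-r) with hu
  have hu0 : 0 < u := Real.rpow_pos_of_pos hs0 _
  have hu1 : 1 ≤ u := by
    have := Real.rpow_le_rpow_of_exponent_ge hs0 hs1 (by linarith : -r ≤ 0)
    simpa using this
  have hbr : -r * (b / r) = -b := by field_simp
  have hsb : s ^ (-b) = u ^ (b / r) := by
    rw [hu, ← Real.rpow_mul hs0.le, hbr]
  have key : (a*u)^k ≤ (k:ℝ)^k * Real.exp (a*u) := pow_le_exp_aux k (by positivity)
  have hexp : Real.exp (-(a*u)) = (Real.exp (a*u))⁻¹ := Real.exp_neg _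
  calc s ^ (-b) * Real.exp (-(a*u))
      ≤ u ^ k * Real.exp (-(a*u)) := by
        apply mul_le_mul_of_nonneg_right _ (Real.exp_pos _).le
        rw [hsb]
        calc u ^ (b/r) ≤ u ^ ((k:ℕ):ℝ) :=
              Real.rpow_le_rpow_of_exponent_le hu1 (Nat.le_ceil _)
        _ = u ^ k := Real.rpow_natCast u k
    _ ≤ ((k:ℝ)^k * Real.exp (a*u) / a^k) * Real.exp (-(a*u)) := by
        apply mul_le_mul_of_nonneg_right _ (Real.exp_pos _).le
        rw [le_div_iff₀ (by positivity : (0:ℝ) < a^k)]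
        calc u^k * a^k = (a*u)^k := by rw [mul_pow]; ring
        _ ≤ _ := key
    _ = (k:ℝ)^k / a^k := by
        rw [hexp]
        field_simp

set_option maxHeartbeats 4000000 in
/-- For fixed `x ≠ 0`, the convolution of the kernel profile
`h(s) = s^{α-αn/2-1} μ_n(s^{-α/2}|x|) exp(-σ(s^{-α/2}|x|)^{2/(2-α)})` with `(1+τ)^{-1}`
tends to `0` as `t → ∞`. -/
theorem convolution_with_decaying_factor_tendsto_zero
    (α σ : ℝ) (n : ℕ) (hα₁ : 1 < α) (hα₂ : α < 2) (hn : 3 ≤ n) (hσ : 0 < σ)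
    (x : EuclideanSpace ℝ (Fin n)) (hx : x ≠ 0)
    (h : ℝ → ℝ)
    (hh : ∀ s : ℝ, h s = s ^ (α - α * n / 2 - 1) * mun n (s ^ (-α / 2) * ‖x‖)
        * Real.exp (-σ * (s ^ (-α / 2) * ‖x‖) ^ (2 / (2 - α)))) :
    Tendsto (fun t : ℝ => ∫ τ in (0 : ℝ)..t, h (t - τ) * (1 + τ)⁻¹) atTop (nhds 0) := by
  have h2α : (0:ℝ) < 2 - α := by linarith
  have hα0 : (0:ℝ) < α := by linarith
  have hn3 : (3:ℝ) ≤ (n:ℝ) := by exact_mod_cast hn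
  obtain ⟨c, hc_def⟩ : ∃ c : ℝ, c = ‖x‖ := ⟨_, rfl⟩
  have hc : 0 < c := by rw [hc_def]; exact norm_pos_iff.mpr hx
  obtain ⟨q, hq_def⟩ : ∃ q : ℝ, q = 2 / (2 - α) := ⟨_, rfl⟩
  have hq : 0 < q := by rw [hq_def]; positivity
  obtain ⟨p, hp_def⟩ : ∃ p : ℝ, p = α - α * n / 2 - 1 := ⟨_, rfl⟩
  have hp_neg : p < 0 := by rw [hp_def]; nlinarith
  obtain ⟨r, hr_def⟩ : ∃ r : ℝ, r = α * q / 2 := ⟨_, rfl⟩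
  have hr : 0 < r := by rw [hr_def]; positivity
  obtain ⟨a, ha_def⟩ : ∃ a : ℝ, a = σ * c ^ q := ⟨_, rfl⟩
  have ha : 0 < a := by
    rw [ha_def]; exact mul_pos hσ (Real.rpow_pos_of_pos hc _)
  -- normal form of h
  have hrepr : ∀ s : ℝ, 0 < s →
      h s = s ^ p * mun n (s ^ (-α / 2) * c) * Real.exp (-(a * s ^ (-r))) := by
    intro s hs
    have e1 : -σ * (s ^ (-α / 2) * c) ^ q = -(a * s ^ (-r)) := by
      rw [Real.mul_rpow (Real.rpow_nonneg hs.le _) hc.le, ← Real.rpow_mul hs.le]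
      have e2 : -α / 2 * q = -r := by rw [hr_def]; ring
      rw [e2, ha_def]
      ring
    rw [hh, ← hc_def, ← hq_def, ← hp_def, e1]
  have hmun_nonneg : ∀ z : ℝ, 0 ≤ z → 0 ≤ mun n z := by
    intro z hz
    unfold mun
    split_ifs
    · norm_num
    · positivity
    · exact Real.rpow_nonneg hz _
  have hpos : ∀ s : ℝ, 0 < s → 0 ≤ h s := by
    intro s hs
    rw [hrepr s hs]
    have h1 := hmun_nonneg (s ^ (-α / 2) * c) (by positivity)
    have h2 : (0:ℝ) ≤ s ^ p := (Real.rpow_pos_of_pos hs p).le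
    positivity
  have h0 : h 0 = 0 := by
    rw [hh, ← hp_def, Real.zero_rpow hp_neg.ne]
    ring
  have hmeas : Measurable h := by
    have hfe : h = fun s => s ^ (α - α * n / 2 - 1) * mun n (s ^ (-α / 2) * ‖x‖)
        * Real.exp (-σ * (s ^ (-α / 2) * ‖x‖) ^ (2 / (2 - α))) := funext hh
    rw [hfe]
    unfold mun
    split_ifs <;> · measurability
  have hexp1 : ∀ s : ℝ, 0 < s → Real.exp (-(a * s ^ (-r))) ≤ 1 := by
    intro s hs
    rw [Real.exp_le_one_iff]
    have h1 : 0 < s ^ (-r) := Real.rpow_pos_of_pos hs _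
    nlinarith
  -- bound for s ≥ 1
  have hbound1 : ∃ K : ℝ, 0 ≤ K ∧ ∀ s : ℝ, 1 ≤ s → h s ≤ K * s ^ (-(1 + α/2)) := by
    rcases eq_or_ne n 3 with h3 | h3
    · refine ⟨1, zero_le_one, fun s hs => ?_⟩
      have hs0 : 0 < s := lt_of_lt_of_le one_pos hs
      have hm : mun n (s ^ (-α / 2) * c) = 1 := by simp [mun, h3]
      have hpe : p = -(1 + α/2) := by rw [hp_def, h3]; push_cast; ring
      rw [hrepr s hs0, hm, mul_one, one_mul, hpe]
      calc s ^ (-(1+α/2)) * Real.exp (-(a * s ^ (-r)))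
          ≤ s ^ (-(1+α/2)) * 1 :=
            mul_le_mul_of_nonneg_left (hexp1 s hs0) (Real.rpow_pos_of_pos hs0 _).le
        _ = s ^ (-(1+α/2)) := mul_one _
    rcases eq_or_ne n 4 with h4 | h4
    · refine ⟨2 + |Real.log c|, by positivity, fun s hs => ?_⟩
      have hs0 : 0 < s := lt_of_lt_of_le one_pos hs
      have hm : mun n (s ^ (-α / 2) * c) = 1 + |Real.log (s ^ (-α / 2) * c)| := by
        simp [mun, h3, h4]
      have hlog : |Real.log (s ^ (-α / 2) * c)| ≤ α/2 * Real.log s + |Real.log c| := by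
        rw [Real.log_mul (Real.rpow_pos_of_pos hs0 _).ne' hc.ne']
        refine (abs_add_le _ _).trans (add_le_add_left ?_ _)
        rw [Real.log_rpow hs0, abs_mul, abs_of_nonneg (Real.log_nonneg hs)]
        have : |(-α / 2)| = α / 2 := by
          rw [abs_div, abs_neg, abs_of_pos hα0]
          norm_num
        rw [this]
      have l1 : Real.log s ≤ s ^ (α/2) / (α/2) := Real.log_le_rpow_div hs0.le (by positivity)
      have l2 : α/2 * Real.log s ≤ s ^ (α/2) := by
        have := mul_le_mul_of_nonneg_left l1 (le_of_lt (by positivity : (0:ℝ) < α/2))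
        calc α/2 * Real.log s ≤ α/2 * (s ^ (α/2) / (α/2)) := this
          _ = s ^ (α/2) := by field_simp
      have l3 : (1:ℝ) ≤ s ^ (α/2) := by
        have := Real.rpow_le_rpow_of_exponent_le hs (by positivity : (0:ℝ) ≤ α/2)
        simpa using this
      have hmle : mun n (s ^ (-α / 2) * c) ≤ (2 + |Real.log c|) * s ^ (α/2) := by
        rw [hm]
        have l4 : |Real.log c| ≤ |Real.log c| * s ^ (α/2) :=
          le_mul_of_one_le_right (abs_nonneg _) l3
        nlinarith [hlog]
      have hsp : (0:ℝ) ≤ s ^ p := (Real.rpow_pos_of_pos hs0 p).le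
      calc h s = s ^ p * mun n (s ^ (-α / 2) * c) * Real.exp (-(a * s ^ (-r))) := hrepr s hs0
        _ ≤ s ^ p * ((2 + |Real.log c|) * s ^ (α/2)) * 1 := by
            apply mul_le_mul (mul_le_mul_of_nonneg_left hmle hsp) (hexp1 s hs0)
              (Real.exp_pos _).le (by positivity)
        _ = (2 + |Real.log c|) * (s ^ p * s ^ (α/2)) := by ring
        _ = (2 + |Real.log c|) * s ^ (p + α/2) := by rw [← Real.rpow_add hs0]
        _ = (2 + |Real.log c|) * s ^ (-(1 + α/2)) := by
            have : p + α/2 = -(1 + α/2) := by rw [hp_def, h4]; push_cast; ring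
            rw [this]
    · -- n ≥ 5
      refine ⟨c ^ ((4:ℝ) - n), Real.rpow_nonneg hc.le _, fun s hs => ?_⟩
      have hs0 : 0 < s := lt_of_lt_of_le one_pos hs
      have hm : mun n (s ^ (-α / 2) * c)
          = s ^ (-α / 2 * ((4:ℝ) - n)) * c ^ ((4:ℝ) - n) := by
        rw [show mun n (s ^ (-α / 2) * c) = (s ^ (-α / 2) * c) ^ ((4:ℝ) - n) by simp [mun, h3, h4],
          Real.mul_rpow (Real.rpow_nonneg hs0.le _) hc.le, ← Real.rpow_mul hs0.le]
      have hsp : (0:ℝ) ≤ s ^ p := (Real.rpow_pos_of_pos hs0 p).le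
      calc h s = s ^ p * mun n (s ^ (-α / 2) * c) * Real.exp (-(a * s ^ (-r))) := hrepr s hs0
        _ ≤ s ^ p * (s ^ (-α / 2 * ((4:ℝ) - n)) * c ^ ((4:ℝ) - n)) * 1 := by
            rw [hm]
            exact mul_le_mul_of_nonneg_left (hexp1 s hs0) (by positivity)
        _ = c ^ ((4:ℝ) - n) * (s ^ p * s ^ (-α / 2 * ((4:ℝ) - n))) := by ring
        _ = c ^ ((4:ℝ) - n) * s ^ (p + -α / 2 * ((4:ℝ) - n)) := by rw [← Real.rpow_add hs0]
        _ = c ^ ((4:ℝ) - n) * s ^ (-(α + 1)) := by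
            have : p + -α / 2 * ((4:ℝ) - n) = -(α + 1) := by rw [hp_def]; ring
            rw [this]
        _ ≤ c ^ ((4:ℝ) - n) * s ^ (-(1 + α/2)) := by
            apply mul_le_mul_of_nonneg_left _ (Real.rpow_nonneg hc.le _)
            exact Real.rpow_le_rpow_of_exponent_le hs (by linarith)
  -- bound on (0,1]
  have hbound0 : ∃ M : ℝ, ∀ s ∈ Ioc (0:ℝ) 1, h s ≤ M := by
    have hb : (0:ℝ) < α * n / 2 + 2 := by positivity
    obtain ⟨C, hC0, hC⟩ := bounded_aux ha hr hb
    have core : ∃ K : ℝ, 0 ≤ K ∧ ∀ s ∈ Ioc (0:ℝ) 1,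
        h s ≤ K * (s ^ (-(α * n / 2 + 2)) * Real.exp (-(a * s ^ (-r)))) := by
      rcases eq_or_ne n 3 with h3 | h3
      · refine ⟨1, zero_le_one, fun s hs => ?_⟩
        obtain ⟨hs0, hs1⟩ := hs
        have hm : mun n (s ^ (-α / 2) * c) = 1 := by simp [mun, h3]
        have hple : s ^ p ≤ s ^ (-(α * n / 2 + 2)) := by
          apply Real.rpow_le_rpow_of_exponent_ge hs0 hs1
          rw [hp_def, h3]; push_cast; linarith
        rw [hrepr s hs0, hm, mul_one, one_mul]
        exact mul_le_mul_of_nonneg_right hple (Real.exp_pos _).le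
      rcases eq_or_ne n 4 with h4 | h4
      · refine ⟨1 + |Real.log c| + α/2, by positivity, fun s hs => ?_⟩
        obtain ⟨hs0, hs1⟩ := hs
        have hm : mun n (s ^ (-α / 2) * c) = 1 + |Real.log (s ^ (-α / 2) * c)| := by
          simp [mun, h3, h4]
        have hsinv : (1:ℝ) ≤ s ^ (-1:ℝ) := by
          have := Real.rpow_le_rpow_of_exponent_ge hs0 hs1 (by norm_num : (-1:ℝ) ≤ 0)
          simpa using this
        have hls : |Real.log s| ≤ s ^ (-1:ℝ) := by
          rw [abs_of_nonpos (Real.log_nonpos hs0.le hs1), ← Real.log_inv]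
          rw [Real.rpow_neg_one]
          have := Real.log_le_sub_one_of_pos (inv_pos.mpr hs0)
          linarith
        have hlog : |Real.log (s ^ (-α / 2) * c)| ≤ α/2 * |Real.log s| + |Real.log c| := by
          rw [Real.log_mul (Real.rpow_pos_of_pos hs0 _).ne' hc.ne']
          refine (abs_add_le _ _).trans (add_le_add_left ?_ _)
          rw [Real.log_rpow hs0, abs_mul]
          have : |(-α / 2)| = α / 2 := by
            rw [abs_div, abs_neg, abs_of_pos hα0]; norm_num
          rw [this]
        have hmle : mun n (s ^ (-α / 2) * c) ≤ (1 + |Real.log c| + α/2) * s ^ (-1:ℝ) := by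
          rw [hm]
          have l4 : |Real.log c| ≤ |Real.log c| * s ^ (-1:ℝ) :=
            le_mul_of_one_le_right (abs_nonneg _) hsinv
          nlinarith [hlog, hls, abs_nonneg (Real.log s), hα0]
        have hsp : (0:ℝ) ≤ s ^ p := (Real.rpow_pos_of_pos hs0 p).le
        have hple : s ^ (p + (-1)) ≤ s ^ (-(α * n / 2 + 2)) := by
          apply Real.rpow_le_rpow_of_exponent_ge hs0 hs1
          rw [hp_def, h4]; push_cast; linarith
        calc h s = s ^ p * mun n (s ^ (-α / 2) * c) * Real.exp (-(a * s ^ (-r))) := hrepr s hs0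
          _ ≤ s ^ p * ((1 + |Real.log c| + α/2) * s ^ (-1:ℝ)) * Real.exp (-(a * s ^ (-r))) := by
              apply mul_le_mul_of_nonneg_right
                (mul_le_mul_of_nonneg_left hmle hsp) (Real.exp_pos _).le
          _ = (1 + |Real.log c| + α/2) * ((s ^ p * s ^ (-1:ℝ)) * Real.exp (-(a * s ^ (-r)))) := by
              ring
          _ = (1 + |Real.log c| + α/2) * (s ^ (p + (-1)) * Real.exp (-(a * s ^ (-r)))) := by
              rw [← Real.rpow_add hs0]
          _ ≤ (1 + |Real.log c| + α/2) * (s ^ (-(α * n / 2 + 2)) * Real.exp (-(a * s ^ (-r)))) := by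
              apply mul_le_mul_of_nonneg_left _ (by positivity)
              exact mul_le_mul_of_nonneg_right hple (Real.exp_pos _).le
      · -- n ≥ 5
        have hn5 : 5 ≤ n := by omega
        have hn5' : (5:ℝ) ≤ (n:ℝ) := by exact_mod_cast hn5
        refine ⟨c ^ ((4:ℝ) - n), Real.rpow_nonneg hc.le _, fun s hs => ?_⟩
        obtain ⟨hs0, hs1⟩ := hs
        have hm : mun n (s ^ (-α / 2) * c)
            = s ^ (-α / 2 * ((4:ℝ) - n)) * c ^ ((4:ℝ) - n) := by
          rw [show mun n (s ^ (-α / 2) * c) = (s ^ (-α / 2) * c) ^ ((4:ℝ) - n) by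
              simp [mun, h3, h4],
            Real.mul_rpow (Real.rpow_nonneg hs0.le _) hc.le, ← Real.rpow_mul hs0.le]
        have hsle1 : s ^ (-α / 2 * ((4:ℝ) - n)) ≤ 1 := by
          apply Real.rpow_le_one hs0.le hs1
          nlinarith
        have hple : s ^ p ≤ s ^ (-(α * n / 2 + 2)) := by
          apply Real.rpow_le_rpow_of_exponent_ge hs0 hs1
          rw [hp_def]; push_cast; linarith
        have hsp : (0:ℝ) ≤ s ^ p := (Real.rpow_pos_of_pos hs0 p).le
        calc h s = s ^ p * mun n (s ^ (-α / 2) * c) * Real.exp (-(a * s ^ (-r))) := hrepr s hs0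
          _ = s ^ p * (s ^ (-α / 2 * ((4:ℝ) - n)) * c ^ ((4:ℝ) - n))
                * Real.exp (-(a * s ^ (-r))) := by rw [hm]
          _ ≤ s ^ p * (1 * c ^ ((4:ℝ) - n)) * Real.exp (-(a * s ^ (-r))) := by
              apply mul_le_mul_of_nonneg_right _ (Real.exp_pos _).le
              apply mul_le_mul_of_nonneg_left _ hsp
              exact mul_le_mul_of_nonneg_right hsle1 (Real.rpow_nonneg hc.le _)
          _ = c ^ ((4:ℝ) - n) * (s ^ p * Real.exp (-(a * s ^ (-r)))) := by ring
          _ ≤ c ^ ((4:ℝ) - n) * (s ^ (-(α * n / 2 + 2)) * Real.exp (-(a * s ^ (-r)))) := by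
              apply mul_le_mul_of_nonneg_left _ (Real.rpow_nonneg hc.le _)
              exact mul_le_mul_of_nonneg_right hple (Real.exp_pos _).le
    obtain ⟨K, hK0, hK⟩ := core
    refine ⟨K * C, fun s hs => ?_⟩
    calc h s ≤ K * (s ^ (-(α * n / 2 + 2)) * Real.exp (-(a * s ^ (-r)))) := hK s hs
      _ ≤ K * C := mul_le_mul_of_nonneg_left (hC s hs) hK0
  -- integrability on (0, ∞)
  have hint : IntegrableOn h (Ioi (0:ℝ)) := by
    obtain ⟨M, hM⟩ := hbound0
    obtain ⟨K, hK0, hK⟩ := hbound1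
    have hint0 : IntegrableOn h (Ioc (0:ℝ) 1) := by
      apply Integrable.mono' (g := fun _ => M)
        (integrableOn_const measure_Ioc_lt_top.ne)
        hmeas.aestronglyMeasurable.restrict
      filter_upwards [ae_restrict_mem measurableSet_Ioc] with s hs
      rw [Real.norm_eq_abs, abs_of_nonneg (hpos s hs.1)]
      exact hM s hs
    have hint1 : IntegrableOn h (Ioi (1:ℝ)) := by
      apply Integrable.mono' (g := fun s => K * s ^ (-(1 + α/2)))
        (((integrableOn_Ioi_rpow_of_lt (by linarith) one_pos)).const_mul K)
        hmeas.aestronglyMeasurable.restrict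
      filter_upwards [ae_restrict_mem measurableSet_Ioi] with s hs
      rw [Real.norm_eq_abs, abs_of_nonneg (hpos s (lt_trans one_pos hs))]
      exact hK s hs.le
    have : Ioi (0:ℝ) = Ioc 0 1 ∪ Ioi 1 := (Ioc_union_Ioi_eq_Ioi zero_le_one).symm
    rw [this]
    exact hint0.union hint1
  -- the limit argument
  have hA : Tendsto (fun t : ℝ => ∫ s in (0:ℝ)..t, h s) atTop (𝓝 (∫ s in Ioi (0:ℝ), h s)) :=
    intervalIntegral_tendsto_integral_Ioi 0 hint tendsto_id
  have hdiv : Tendsto (fun t : ℝ => t / 2) atTop atTop :=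
    Tendsto.atTop_div_const two_pos tendsto_id
  have hA2 : Tendsto (fun t : ℝ => ∫ s in (0:ℝ)..(t/2), h s) atTop (𝓝 (∫ s in Ioi (0:ℝ), h s)) :=
    hA.comp hdiv
  have hG : Tendsto (fun t : ℝ => (∫ s in Ioi (0:ℝ), h s) * (1 + t/2)⁻¹
      + ((∫ s in (0:ℝ)..t, h s) - ∫ s in (0:ℝ)..(t/2), h s)) atTop (𝓝 0) := by
    have g1 : Tendsto (fun t : ℝ => (1 + t/2)⁻¹) atTop (𝓝 0) := by
      apply Tendsto.inv_tendsto_atTop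
      exact tendsto_atTop_add_const_left atTop 1 hdiv
    have := (g1.const_mul (∫ s in Ioi (0:ℝ), h s)).add (hA.sub hA2)
    simpa using this
  apply squeeze_zero_norm' _ hG
  filter_upwards [eventually_ge_atTop (1:ℝ)] with t ht
  have ht0 : (0:ℝ) < t := lt_of_lt_of_le one_pos ht
  have ht2 : (0:ℝ) ≤ t/2 := by linarith
  have ht2t : t/2 ≤ t := by linarith
  have key : (∫ τ in (0:ℝ)..t, h (t - τ) * (1 + τ)⁻¹)
      = ∫ s in (0:ℝ)..t, h s * (1 + (t - s))⁻¹ := by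
    have := intervalIntegral.integral_comp_sub_left (a := (0:ℝ)) (b := t)
      (fun s => h s * (1 + (t - s))⁻¹) t
    simp only [sub_sub_cancel, sub_self, sub_zero] at this
    exact this
  have hIh : ∀ u v : ℝ, 0 ≤ u → u ≤ v → IntervalIntegrable h volume u v := by
    intro u v hu huv
    rw [intervalIntegrable_iff_integrableOn_Ioc_of_le huv]
    exact hint.mono_set (fun s hs => mem_Ioi.mpr (lt_of_le_of_lt hu hs.1))
  have hIf : ∀ u v : ℝ, 0 ≤ u → u ≤ v → v ≤ t →
      IntervalIntegrable (fun s => h s * (1 + (t - s))⁻¹) volume u v := by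
    intro u v hu huv hvt
    rw [intervalIntegrable_iff_integrableOn_Ioc_of_le huv]
    have hsub : Ioc u v ⊆ Ioi (0:ℝ) := fun s hs => mem_Ioi.mpr (lt_of_le_of_lt hu hs.1)
    have hg : IntegrableOn h (Ioc u v) := hint.mono_set hsub
    have hm1 : Measurable (fun s : ℝ => h s * (1 + (t - s))⁻¹) :=
      hmeas.mul ((measurable_id.const_sub t).const_add 1).inv
    refine hg.mono' hm1.aestronglyMeasurable.restrict ?_
    · filter_upwards [ae_restrict_mem measurableSet_Ioc] with s hs
      have hs0 : 0 < s := lt_of_le_of_lt hu hs.1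
      have h1ts : (1:ℝ) ≤ 1 + (t - s) := by
        have := hs.2.trans hvt
        linarith
      rw [Real.norm_eq_abs, abs_mul, abs_of_nonneg (hpos s hs0),
        abs_of_nonneg (inv_nonneg.mpr (by linarith))]
      calc h s * (1+(t-s))⁻¹ ≤ h s * 1 :=
            mul_le_mul_of_nonneg_left (inv_le_one_of_one_le₀ h1ts) (hpos s hs0)
        _ = h s := mul_one _
  have split : (∫ s in (0:ℝ)..t, h s * (1 + (t - s))⁻¹)
      = (∫ s in (0:ℝ)..(t/2), h s * (1 + (t - s))⁻¹)
        + ∫ s in (t/2)..t, h s * (1 + (t - s))⁻¹ :=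
    (intervalIntegral.integral_add_adjacent_intervals
      (hIf 0 (t/2) le_rfl ht2 ht2t) (hIf (t/2) t ht2 ht2t le_rfl)).symm
  have hp1 : |∫ s in (0:ℝ)..(t/2), h s * (1 + (t - s))⁻¹|
      ≤ (∫ s in Ioi (0:ℝ), h s) * (1 + t/2)⁻¹ := by
    calc |∫ s in (0:ℝ)..(t/2), h s * (1 + (t - s))⁻¹|
        ≤ ∫ s in (0:ℝ)..(t/2), |h s * (1 + (t - s))⁻¹| :=
          intervalIntegral.abs_integral_le_integral_abs ht2
      _ ≤ ∫ s in (0:ℝ)..(t/2), h s * (1 + t/2)⁻¹ := by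
          apply intervalIntegral.integral_mono_on ht2 ((hIf 0 (t/2) le_rfl ht2 ht2t).abs)
            ((hIh 0 (t/2) le_rfl ht2).mul_const _)
          intro s hs
          rcases eq_or_lt_of_le hs.1 with h0s | h0s
          · rw [← h0s]
            simp [h0]
          · have hinv_le : (1 + (t - s))⁻¹ ≤ (1 + t/2)⁻¹ := by
              apply inv_anti₀ (by linarith)
              linarith [hs.2]
            rw [abs_mul, abs_of_nonneg (hpos s h0s),
              abs_of_nonneg (inv_nonneg.mpr (by linarith [hs.2] : (0:ℝ) ≤ 1 + (t - s)))]
            exact mul_le_mul_of_nonneg_left hinv_le (hpos s h0s)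
      _ = (∫ s in (0:ℝ)..(t/2), h s) * (1 + t/2)⁻¹ := intervalIntegral.integral_mul_const _ _
      _ ≤ (∫ s in Ioi (0:ℝ), h s) * (1 + t/2)⁻¹ := by
          apply mul_le_mul_of_nonneg_right _ (inv_nonneg.mpr (by linarith))
          rw [intervalIntegral.integral_of_le ht2]
          apply setIntegral_mono_set hint
          · filter_upwards [ae_restrict_mem measurableSet_Ioi] with s hs using hpos s hs
          · exact HasSubset.Subset.eventuallyLE (fun s hs => mem_Ioi.mpr hs.1)
  have hp2 : |∫ s in (t/2)..t, h s * (1 + (t - s))⁻¹|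
      ≤ (∫ s in (0:ℝ)..t, h s) - ∫ s in (0:ℝ)..(t/2), h s := by
    calc |∫ s in (t/2)..t, h s * (1 + (t - s))⁻¹|
        ≤ ∫ s in (t/2)..t, |h s * (1 + (t - s))⁻¹| :=
          intervalIntegral.abs_integral_le_integral_abs ht2t
      _ ≤ ∫ s in (t/2)..t, h s := by
          apply intervalIntegral.integral_mono_on ht2t ((hIf (t/2) t ht2 ht2t le_rfl).abs)
            (hIh (t/2) t ht2 ht2t)
          intro s hs
          have hs0 : 0 < s := lt_of_lt_of_le (by linarith : (0:ℝ) < t/2) hs.1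
          have h1ts : (1:ℝ) ≤ 1 + (t - s) := by linarith [hs.2]
          rw [abs_mul, abs_of_nonneg (hpos s hs0),
            abs_of_nonneg (inv_nonneg.mpr (by linarith))]
          calc h s * (1+(t-s))⁻¹ ≤ h s * 1 :=
                mul_le_mul_of_nonneg_left (inv_le_one_of_one_le₀ h1ts) (hpos s hs0)
            _ = h s := mul_one _
      _ = (∫ s in (0:ℝ)..t, h s) - ∫ s in (0:ℝ)..(t/2), h s := by
          rw [← intervalIntegral.integral_interval_sub_left
            (hIh 0 t le_rfl (by linarith)) (hIh 0 (t/2) le_rfl ht2)]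
  rw [Real.norm_eq_abs, key, split]
  calc |(∫ s in (0:ℝ)..(t/2), h s * (1 + (t - s))⁻¹)
        + ∫ s in (t/2)..t, h s * (1 + (t - s))⁻¹|
      ≤ |∫ s in (0:ℝ)..(t/2), h s * (1 + (t - s))⁻¹|
        + |∫ s in (t/2)..t, h s * (1 + (t - s))⁻¹| := abs_add_le _ _
    _ ≤ _ := add_le_add hp1 hp2
end
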